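/- Let R = ℤ localized at the prime ideal (2), i.e., the subring {a/b ∈ ℚ : b odd} of ℚ. The class of injective (equivalently, divisible) R-modules is a torsion class in Mod(R), it equals Gen(ℚ ⊕ ℚ/R), and it is not of the form Gen(M) for any finitely generated R-module M. -/

import Mathlib

set_option synthInstance.maxHeartbeats 1000000
set_option maxHeartbeats 1000000

/-- A torsion class in `Mod R`: a class of modules closed under isomorphisms, arbitrary
direct sums, quotients and extensions. -/
def IsTorsionClass (R : Type) [Ring R] (T : Set (ModuleCat.{0} R)) : Prop :=
  (∀ M N : ModuleCat.{0} R, Nonempty ((M : Type) ≃ₗ[R] (N : Type)) → M ∈ T → N ∈ T) ∧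
  (∀ (ι : Type) (F : ι → ModuleCat.{0} R), (∀ i, F i ∈ T) →
      ModuleCat.of R (DirectSum ι (fun i => (F i : Type))) ∈ T) ∧
  (∀ M N : ModuleCat.{0} R, M ∈ T →
      (∃ p : (M : Type) →ₗ[R] (N : Type), Function.Surjective p) → N ∈ T) ∧
  (∀ A B C : ModuleCat.{0} R, A ∈ T → C ∈ T →
      (∃ (f : (A : Type) →ₗ[R] (B : Type)) (g : (B : Type) →ₗ[R] (C : Type)),
        Function.Injective f ∧ Function.Surjective g ∧ LinearMap.range f = LinearMap.ker g) →
      B ∈ T)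

/-- `Gen M`: the class of modules which are quotients of (possibly infinite) direct sums
of copies of `M`. -/
def GenClass (R : Type) [Ring R] (M : ModuleCat.{0} R) : Set (ModuleCat.{0} R) :=
  {X | ∃ (ι : Type) (p : (ι →₀ (M : Type)) →ₗ[R] (X : Type)), Function.Surjective p}

section Aux

variable (R : Subring ℚ)

/-- Divisibility predicate. -/
def DivMod (M : Type) [AddCommGroup M] [Module ↥R M] : Prop :=
  ∀ r : ↥R, r ≠ 0 → ∀ m : M, ∃ n : M, r • n = m

variable (hR : ∀ x : ℚ, x ∈ R ↔ ∃ a b : ℤ, Odd b ∧ x = (a : ℚ) / (b : ℚ))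

lemma odd_ne_zero {a : ℤ} (ha : Odd a) : a ≠ 0 := by
  rintro rfl; exact (by decide : ¬ (0 : ℤ) % 2 = 1) (Int.odd_iff.mp ha)

include hR in
lemma isUnit_of_odd (x : ↥R) (a b : ℤ) (ha : Odd a) (hb : Odd b)
    (hx : (x : ℚ) = (a : ℚ) / (b : ℚ)) : IsUnit x := by
  have ha0 : (a : ℚ) ≠ 0 := Int.cast_ne_zero.2 (odd_ne_zero ha)
  have hb0 : (b : ℚ) ≠ 0 := Int.cast_ne_zero.2 (odd_ne_zero hb)
  have hy : (b : ℚ) / (a : ℚ) ∈ R := (hR _).2 ⟨b, a, ha, rfl⟩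
  refine IsUnit.of_mul_eq_one (a := x) ⟨_, hy⟩ (Subtype.ext ?_)
  push_cast [hx]
  field_simp

include hR in
lemma two_mem_jacobson : (2 : ↥R) ∈ (⊥ : Ideal ↥R).jacobson := by
  rw [Ideal.mem_jacobson_bot]
  intro y
  obtain ⟨c, d, hd, hcd⟩ := (hR (y : ℚ)).1 y.2
  have hd0 : (d : ℚ) ≠ 0 := Int.cast_ne_zero.2 (odd_ne_zero hd)
  refine isUnit_of_odd R hR _ (2 * c + d) d ?_ hd ?_
  · rcases hd with ⟨k, hk⟩; exact ⟨c + k, by omega⟩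
  · have h2 : ((2 : ↥R) : ℚ) = 2 := map_ofNat R.subtype 2
    have h1 : ((2 * y + 1 : ↥R) : ℚ) = 2 * (y : ℚ) + 1 := by
      rw [Subring.coe_add, Subring.coe_mul, h2, Subring.coe_one]
    rw [h1, hcd]
    field_simp
    simp

include hR in
lemma ideal_principal (I : Ideal ↥R) : ∃ g : ↥R, I = Ideal.span {g} := by
  obtain ⟨n, hn⟩ := (IsPrincipalIdealRing.principal (I.comap (Int.castRingHom ↥R))).principal
  refine ⟨((n : ℤ) : ↥R), le_antisymm ?_ ?_⟩
  · intro x hx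
    obtain ⟨a, b, hb, hab⟩ := (hR (x : ℚ)).1 x.2
    have hb0 : (b : ℚ) ≠ 0 := Int.cast_ne_zero.2 (odd_ne_zero hb)
    have hbu : IsUnit ((b : ℤ) : ↥R) :=
      isUnit_of_odd R hR _ b 1 hb odd_one (by push_cast; simp)
    obtain ⟨u, hu⟩ := hbu
    have hxa : x * ((b : ℤ) : ↥R) = ((a : ℤ) : ↥R) := by
      refine Subtype.ext ?_
      push_cast [hab]
      field_simp
    have haI : ((a : ℤ) : ↥R) ∈ I := by
      rw [← hxa]; exact I.mul_mem_right _ hx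
    have haJ : a ∈ I.comap (Int.castRingHom ↥R) := haI
    rw [hn] at haJ
    obtain ⟨c, hc⟩ := Submodule.mem_span_singleton.1 haJ
    have hc' : a = c * n := by rw [← hc]; simp [smul_eq_mul, mul_comm]
    have haS : ((a : ℤ) : ↥R) ∈ Ideal.span {((n : ℤ) : ↥R)} := by
      rw [Ideal.mem_span_singleton]
      exact ⟨((c : ℤ) : ↥R), by rw [hc']; push_cast; ring⟩
    have hx' : x = ((a : ℤ) : ↥R) * ↑u⁻¹ := by
      rw [Units.eq_mul_inv_iff_mul_eq, hu, hxa]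
    rw [hx']
    exact Ideal.mul_mem_right _ _ haS
  · rw [Ideal.span_le, Set.singleton_subset_iff]
    have : n ∈ I.comap (Int.castRingHom ↥R) := by
      rw [hn]; exact Submodule.mem_span_singleton_self n
    exact this

include hR in
lemma baer_of_div (M : Type) [AddCommGroup M] [Module ↥R M] (hdiv : DivMod R M) :
    Module.Baer ↥R M := by
  intro I f
  obtain ⟨g, rfl⟩ := ideal_principal R hR I
  by_cases hg : g = 0
  · subst hg
    refine ⟨0, fun x hx => ?_⟩
    have hx0 : x = 0 := by
      have h := hx
      rw [show Ideal.span ({(0 : ↥R)} : Set ↥R) = ⊥ from Ideal.span_singleton_eq_bot.mpr rfl,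
        Ideal.mem_bot] at h
      exact h
    subst hx0
    rw [show (⟨(0 : ↥R), hx⟩ : Ideal.span ({(0 : ↥R)} : Set ↥R)) = 0 from Subtype.ext rfl,
      map_zero, map_zero]
  · have hgmem : g ∈ Ideal.span ({g} : Set ↥R) := Ideal.mem_span_singleton_self g
    obtain ⟨n, hn⟩ := hdiv g hg (f ⟨g, hgmem⟩)
    refine ⟨LinearMap.toSpanSingleton ↥R M n, fun x hx => ?_⟩
    obtain ⟨c, hc⟩ := Ideal.mem_span_singleton'.1 hx
    have h1 : f ⟨x, hx⟩ = c • f ⟨g, hgmem⟩ := by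
      rw [← map_smul]
      congr 1
      exact Subtype.ext (by simpa [smul_eq_mul] using hc.symm)
    rw [LinearMap.toSpanSingleton_apply, h1, ← hn, ← hc, mul_smul]

include hR in
lemma inj_of_div (M : Type) [AddCommGroup M] [Module ↥R M] (hdiv : DivMod R M) :
    Module.Injective ↥R M :=
  (baer_of_div R hR M hdiv).injective

lemma div_of_inj (M : Type) [AddCommGroup M] [Module ↥R M] (h : Module.Injective ↥R M) :
    DivMod R M := by
  intro r hr m
  have hi : Function.Injective (LinearMap.toSpanSingleton ↥R ↥R r) := by
    intro x y hxy
    simp only [LinearMap.toSpanSingleton_apply, smul_eq_mul] at hxy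
    exact mul_right_cancel₀ hr hxy
  obtain ⟨h', hh'⟩ := h.out _ hi (LinearMap.toSpanSingleton ↥R M m)
  refine ⟨h' 1, ?_⟩
  have := hh' 1
  simp only [LinearMap.toSpanSingleton_apply, one_smul, smul_eq_mul, one_mul] at this
  rw [← this, ← map_smul]
  congr 1
  simp [smul_eq_mul]

lemma div_of_surjective {M N : Type} [AddCommGroup M] [Module ↥R M]
    [AddCommGroup N] [Module ↥R N] (hM : DivMod R M)
    (p : M →ₗ[↥R] N) (hp : Function.Surjective p) : DivMod R N := by
  intro r hr m
  obtain ⟨b, rfl⟩ := hp m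
  obtain ⟨a, ha⟩ := hM r hr b
  exact ⟨p a, by rw [← map_smul, ha]⟩

lemma div_of_equiv {M N : Type} [AddCommGroup M] [Module ↥R M]
    [AddCommGroup N] [Module ↥R N] (e : M ≃ₗ[↥R] N) (hM : DivMod R M) : DivMod R N :=
  div_of_surjective R hM e.toLinearMap e.surjective

lemma div_finsupp {M : Type} [AddCommGroup M] [Module ↥R M] (hM : DivMod R M)
    (ι : Type) : DivMod R (ι →₀ M) := by
  intro r hr m
  induction m using Finsupp.induction with
  | zero => exact ⟨0, smul_zero r⟩
  | single_add a b f _ _ ih =>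
    obtain ⟨nf, hnf⟩ := ih
    obtain ⟨nb, hnb⟩ := hM r hr b
    refine ⟨Finsupp.single a nb + nf, ?_⟩
    rw [smul_add, hnf, Finsupp.smul_single, hnb]

lemma div_directSum (ι : Type) (F : ι → Type) [∀ i, AddCommGroup (F i)]
    [∀ i, Module ↥R (F i)] (hF : ∀ i, DivMod R (F i)) :
    DivMod R (DirectSum ι F) := by
  classical
  intro r hr m
  induction m using DirectSum.induction_on with
  | zero => exact ⟨0, smul_zero r⟩
  | of i x =>
    obtain ⟨y, hy⟩ := hF i r hr x
    refine ⟨DirectSum.lof ↥R ι F i y, ?_⟩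
    rw [← map_smul, hy]
    rfl
  | add x y hx hy =>
    obtain ⟨a, ha⟩ := hx
    obtain ⟨b, hb⟩ := hy
    exact ⟨a + b, by rw [smul_add, ha, hb]⟩

lemma div_extension {A B C : Type} [AddCommGroup A] [Module ↥R A]
    [AddCommGroup B] [Module ↥R B] [AddCommGroup C] [Module ↥R C]
    (hA : DivMod R A) (hC : DivMod R C)
    (f : A →ₗ[↥R] B) (g : B →ₗ[↥R] C) (hg : Function.Surjective g)
    (hfg : LinearMap.range f = LinearMap.ker g) : DivMod R B := by
  intro r hr b
  obtain ⟨c', hc'⟩ := hC r hr (g b)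
  obtain ⟨b', rfl⟩ := hg c'
  have hker : b - r • b' ∈ LinearMap.ker g := by
    rw [LinearMap.mem_ker, map_sub, map_smul, hc', sub_self]
  rw [← hfg] at hker
  obtain ⟨a, ha⟩ := hker
  obtain ⟨a', ha'⟩ := hA r hr a
  refine ⟨b' + f a', ?_⟩
  rw [smul_add, ← map_smul, ha', ha]
  abel

lemma div_rat : DivMod R ℚ := by
  intro r hr m
  have hr0 : (r : ℚ) ≠ 0 := fun h => hr (Subtype.ext h)
  exact ⟨m / (r : ℚ), by show (r : ℚ) * (m / (r : ℚ)) = m; field_simp⟩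

lemma div_prod {M N : Type} [AddCommGroup M] [Module ↥R M]
    [AddCommGroup N] [Module ↥R N] (hM : DivMod R M) (hN : DivMod R N) :
    DivMod R (M × N) := by
  intro r hr m
  obtain ⟨a, ha⟩ := hM r hr m.1
  obtain ⟨b, hb⟩ := hN r hr m.2
  exact ⟨(a, b), by ext <;> simp [ha, hb]⟩

/-- The inclusion `↥R →ₗ[↥R] ℚ`. -/
def inclQ : ↥R →ₗ[↥R] ℚ where
  toFun := fun x => (x : ℚ)
  map_add' := fun x y => rfl
  map_smul' := fun r x => rfl

end Aux

/-- Over the localisation `R` of `ℤ` at the prime `(2)` (realised as the subring of `ℚ`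
of fractions with odd denominator), the class of injective `R`-modules is a torsion
class, it equals `Gen (ℚ ⊕ ℚ/R)`, and it is not generated by any finitely generated
module. -/
theorem injective_modules_torsion_class_of_Z_localised_at_two
    (R : Subring ℚ) (hR : ∀ x : ℚ, x ∈ R ↔ ∃ a b : ℤ, Odd b ∧ x = (a : ℚ) / (b : ℚ)) :
    IsTorsionClass ↥R {M : ModuleCat.{0} ↥R | Module.Injective ↥R M} ∧
    {M : ModuleCat.{0} ↥R | Module.Injective ↥R M} =
      GenClass ↥R (ModuleCat.of ↥R (Prod ℚ (ℚ ⧸ Submodule.span ↥R {(1 : ℚ)}))) ∧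
    ¬ ∃ M : ModuleCat.{0} ↥R, Module.Finite ↥R M ∧
        {N : ModuleCat.{0} ↥R | Module.Injective ↥R N} = GenClass ↥R M := by
  have hQdiv : DivMod R ℚ := div_rat R
  have hQuotdiv : DivMod R (ℚ ⧸ Submodule.span ↥R {(1 : ℚ)}) :=
    div_of_surjective R hQdiv (Submodule.span ↥R {(1 : ℚ)}).mkQ
      (Submodule.Quotient.mk_surjective _)
  have hGendiv : DivMod R (Prod ℚ (ℚ ⧸ Submodule.span ↥R {(1 : ℚ)})) :=
    div_prod R hQdiv hQuotdiv
  refine ⟨⟨?_, ?_, ?_, ?_⟩, ?_, ?_⟩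
  · -- closed under isomorphism
    rintro M N ⟨e⟩ hM
    exact inj_of_div R hR _ (div_of_equiv R e (div_of_inj R _ hM))
  · -- closed under direct sums
    intro ι F hF
    exact inj_of_div R hR _ (div_directSum R ι _ (fun i => div_of_inj R _ (hF i)))
  · -- closed under quotients
    rintro M N hM ⟨p, hp⟩
    exact inj_of_div R hR _ (div_of_surjective R (div_of_inj R _ hM) p hp)
  · -- closed under extensions
    rintro A B C hA hC ⟨f, g, hf, hg, hfg⟩
    exact inj_of_div R hR _
      (div_extension R (div_of_inj R _ hA) (div_of_inj R _ hC) f g hg hfg)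
  · -- the class equals Gen(ℚ ⊕ ℚ/R)
    ext M
    constructor
    · intro hM
      have hdiv : DivMod R M := div_of_inj R _ hM
      -- surjection (M →₀ R) → M
      have hts : Function.Surjective (Finsupp.linearCombination ↥R (id : M → M)) :=
        Finsupp.linearCombination_id_surjective ↥R M
      -- injection (M →₀ R) → (M →₀ ℚ)
      have hinclinj : Function.Injective (inclQ R) := fun x y h => Subtype.ext h
      have hFinjFun : Function.Injective
          (Finsupp.mapRange.linearMap (α := (M : Type)) (inclQ R)) := by
        have : ⇑(Finsupp.mapRange.linearMap (α := (M : Type)) (inclQ R)) =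
            Finsupp.mapRange (inclQ R) (map_zero _) := by
          ext x a
          simp [Finsupp.mapRange.linearMap]
          exact Finsupp.mapRange_apply (hf := map_zero _)
        rw [this]
        exact Finsupp.mapRange_injective _ _ hinclinj
      have hMI : Module.Injective ↥R ↑M := hM
      obtain ⟨h, hh⟩ := hMI.out _ hFinjFun (Finsupp.linearCombination ↥R (id : M → M))
      have hhsurj : Function.Surjective h := by
        intro m
        obtain ⟨x, hx⟩ := hts m
        exact ⟨_, by rw [hh x, hx]⟩
      -- surjection (M →₀ (ℚ × Q)) → (M →₀ ℚ)
      have hPsurj : Function.Surjective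
          (Finsupp.mapRange.linearMap (α := (M : Type))
            (LinearMap.fst ↥R ℚ (ℚ ⧸ Submodule.span ↥R {(1 : ℚ)}))) := by
        have : ⇑(Finsupp.mapRange.linearMap (α := (M : Type))
            (LinearMap.fst ↥R ℚ (ℚ ⧸ Submodule.span ↥R {(1 : ℚ)}))) =
            Finsupp.mapRange (LinearMap.fst ↥R ℚ _) (map_zero _) := by
          ext x a
          simp [Finsupp.mapRange.linearMap]
          exact Finsupp.mapRange_apply
        rw [this]
        exact Finsupp.mapRange_surjective _ _ (fun q => ⟨(q, 0), rfl⟩)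
      exact ⟨(M : Type), h ∘ₗ _, hhsurj.comp hPsurj⟩
    · rintro ⟨ι, p, hp⟩
      exact inj_of_div R hR _
        (div_of_surjective R (div_finsupp R hGendiv ι) p hp)
  · -- not generated by a finitely generated module
    rintro ⟨M, hfin, heq⟩
    -- M ∈ Gen M
    have hMGen : M ∈ GenClass ↥R M := by
      refine ⟨Unit, Finsupp.lapply (), fun m => ⟨Finsupp.single () m, ?_⟩⟩
      simp
    have hMinj : Module.Injective ↥R M := by
      rw [Set.ext_iff] at heq
      exact (heq M).2 hMGen
    have hMdiv : DivMod R M := div_of_inj R _ hMinj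
    have h2 : (2 : ↥R) ≠ 0 := by
      intro h
      have h4 : ((2 : ↥R) : ℚ) = 2 := map_ofNat R.subtype 2
      rw [h] at h4
      norm_num at h4
    -- Nakayama
    have htop : (⊤ : Submodule ↥R M) ≤ Ideal.span {(2 : ↥R)} • ⊤ := by
      intro m _
      obtain ⟨n, hn⟩ := hMdiv 2 h2 m
      rw [← hn]
      exact Submodule.smul_mem_smul (Ideal.mem_span_singleton_self _) trivial
    have hbot : (⊤ : Submodule ↥R M) = ⊥ :=
      Submodule.eq_bot_of_le_smul_of_le_jacobson_bot _ _ hfin.fg_top htop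
        (by rw [Ideal.span_le, Set.singleton_subset_iff]; exact two_mem_jacobson R hR)
    have hsub : ∀ m : (M : Type), m = 0 := by
      intro m
      have : m ∈ (⊥ : Submodule ↥R M) := hbot ▸ Submodule.mem_top
      simpa using this
    -- ℚ is injective hence in Gen M, contradiction
    have hQinj : (ModuleCat.of ↥R ℚ) ∈ {N : ModuleCat.{0} ↥R | Module.Injective ↥R N} :=
      inj_of_div R hR ℚ hQdiv
    rw [heq] at hQinj
    obtain ⟨ι, p, hp⟩ := hQinj
    obtain ⟨y, hy⟩ := hp (1 : ℚ)
    have hy0 : y = 0 := by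
      ext a
      simp [hsub (y a)]
    rw [hy0, map_zero] at hy
    exact (by norm_num : (0 : ℚ) ≠ 1) hy
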